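/- Let S be a finite set of size N, ρ : S → ℝ nonnegative, 1 ≤ p ≤ N, and B a uniformly random p-subset of S. Then the second moment of the estimator ρ̃ = (N/p) Σ_{j∈B} ρ(j) satisfies E[ρ̃²] ≤ (N/p) (Σ_{j∈S} ρ(j))². -/

import Mathlib

open Finset

lemma count_subsets_containing {α : Type*} [DecidableEq α] (S : Finset α) (p : ℕ)
    (hp : 1 ≤ p) {j : α} (hj : j ∈ S) :
    ((S.powersetCard p).filter (fun B => j ∈ B)).card
      = (S.card - 1).choose (p - 1) := by
  rw [← card_erase_of_mem hj, ← card_powersetCard]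
  apply card_bij (fun B _ => B.erase j)
  · intro B hB
    simp only [mem_filter, mem_powersetCard] at hB
    obtain ⟨⟨hBS, hBc⟩, hjB⟩ := hB
    simp only [mem_powersetCard]
    exact ⟨erase_subset_erase _ hBS, by rw [card_erase_of_mem hjB, hBc]⟩
  · intro B₁ h₁ B₂ h₂ h
    simp only [mem_filter] at h₁ h₂
    rw [← insert_erase h₁.2, h, insert_erase h₂.2]
  · intro C hC
    simp only [mem_powersetCard] at hC
    refine ⟨insert j C, ?_, ?_⟩
    · simp only [mem_filter, mem_powersetCard, mem_insert, true_or, and_true]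
      constructor
      · exact insert_subset hj (hC.1.trans (erase_subset _ _))
      · rw [card_insert_of_notMem (fun h => (notMem_erase j S) (hC.1 h)), hC.2]
        omega
    · rw [erase_insert (fun h => (notMem_erase j S) (hC.1 h))]

lemma sum_over_subsets {α : Type*} [DecidableEq α] (S : Finset α) (p : ℕ)
    (hp : 1 ≤ p) (ρ : α → ℝ) :
    ∑ B ∈ S.powersetCard p, ∑ j ∈ B, ρ j
      = ((S.card - 1).choose (p - 1) : ℝ) * ∑ j ∈ S, ρ j := by
  have h1 : ∀ B ∈ S.powersetCard p, ∑ j ∈ B, ρ j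
      = ∑ j ∈ S, if j ∈ B then ρ j else 0 := by
    intro B hB
    rw [sum_ite_mem]
    congr 1
    exact (inter_eq_right.mpr (mem_powersetCard.mp hB).1).symm
  rw [sum_congr rfl h1, sum_comm]
  rw [mul_sum]
  refine sum_congr rfl fun j hj => ?_
  rw [sum_ite, sum_const, sum_const_zero, add_zero, ← count_subsets_containing S p hp hj]
  simp [nsmul_eq_mul]

theorem stmt_3 {α : Type*} [DecidableEq α] (S : Finset α) (N p : ℕ)
    (hN : S.card = N) (hN2 : 2 ≤ N) (hp1 : 1 ≤ p) (hpN : p ≤ N)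
    (ρ : α → ℝ) (hρ : ∀ j ∈ S, 0 ≤ ρ j) :
    (∑ B ∈ S.powersetCard p, (((N : ℝ) / (p : ℝ)) * ∑ j ∈ B, ρ j) ^ 2) /
      ((S.powersetCard p).card : ℝ)
      ≤ ((N : ℝ) / (p : ℝ)) * (∑ j ∈ S, ρ j) ^ 2 := by
  have hp0 : (0:ℝ) < p := by exact_mod_cast hp1
  have hN0 : (0:ℝ) < N := by positivity
  have hT : (0:ℝ) ≤ ∑ j ∈ S, ρ j := sum_nonneg hρ
  have hc : (S.powersetCard p).card = N.choose p := by
    rw [card_powersetCard, hN]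
  have hcpos : (0:ℝ) < ((S.powersetCard p).card : ℝ) := by
    rw [hc]; exact_mod_cast Nat.choose_pos hpN
  -- key nat identity: N * C(N-1, p-1) = p * C(N, p)
  have hkey : N * (N - 1).choose (p - 1) = p * N.choose p := by
    obtain ⟨m, rfl⟩ := Nat.exists_eq_add_of_le hN2
    obtain ⟨q, rfl⟩ := Nat.exists_eq_add_of_le hp1
    simp only [Nat.add_sub_cancel_left, Nat.add_comm 2 m, Nat.add_comm 1 q]
    have := Nat.add_one_mul_choose_eq (m+1) q
    have h1 : m + 2 - 1 = m + 1 := rfl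
    have h2 : q + 1 - 1 = q := rfl
    rw [h1, h2, this]
    ring
  have hkeyR : (N:ℝ) * ((N - 1).choose (p - 1) : ℝ) = (p:ℝ) * (N.choose p : ℝ) := by
    exact_mod_cast hkey
  set T := ∑ j ∈ S, ρ j with hTdef
  set C' := (((N - 1).choose (p - 1)) : ℝ) with hC'
  have hC'nn : (0:ℝ) ≤ C' := by positivity
  have hsum : ∑ B ∈ S.powersetCard p, ∑ j ∈ B, ρ j = C' * T := by
    rw [sum_over_subsets S p hp1 ρ, hN]
  have hsq : ∑ B ∈ S.powersetCard p, (∑ j ∈ B, ρ j) ^ 2 ≤ C' * T * T := by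
    calc ∑ B ∈ S.powersetCard p, (∑ j ∈ B, ρ j) ^ 2
        ≤ ∑ B ∈ S.powersetCard p, (∑ j ∈ B, ρ j) * T := by
          refine sum_le_sum fun B hB => ?_
          obtain ⟨hBS, _⟩ := mem_powersetCard.mp hB
          have hBnn : (0:ℝ) ≤ ∑ j ∈ B, ρ j :=
            sum_nonneg fun j hj => hρ j (hBS hj)
          have hBle : ∑ j ∈ B, ρ j ≤ T :=
            sum_le_sum_of_subset_of_nonneg hBS fun j hj _ => hρ j hj
          rw [sq]
          exact mul_le_mul_of_nonneg_left hBle hBnn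
      _ = C' * T * T := by rw [← sum_mul, hsum]
  rw [div_le_iff₀ hcpos, hc]
  calc ∑ B ∈ S.powersetCard p, (((N:ℝ) / p) * ∑ j ∈ B, ρ j) ^ 2
      = ((N:ℝ)/p)^2 * ∑ B ∈ S.powersetCard p, (∑ j ∈ B, ρ j) ^ 2 := by
        rw [mul_sum]; exact sum_congr rfl fun B _ => by ring
    _ ≤ ((N:ℝ)/p)^2 * (C' * T * T) := by
        exact mul_le_mul_of_nonneg_left hsq (by positivity)
    _ = ((N:ℝ)/p) * T^2 * (((N:ℝ) * C') / p) := by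
        field_simp
    _ = ((N:ℝ)/p) * T^2 * (N.choose p : ℝ) := by
        rw [hkeyR]
        field_simp
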